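/- For every z ∈ ℂ ∖ (−∞,0] and every k ∈ ℤ, the Wronskian of the solutions s(z) and u(z) satisfies [s(z), u(z)]_k = a_k (s_k(z) u_{k+1}(z) − s_{k+1}(z) u_k(z)) = e^{z} z^{−2iρ} Γ(1+2iρ), where z^{−2iρ} is the principal power; in particular this Wronskian is independent of k and nonzero. -/

import Mathlib

open Complex MeasureTheory

noncomputable section

/-- Pochhammer symbol `(a)_n`. -/
def poch (a : ℂ) (n : ℕ) : ℂ := ∏ i ∈ Finset.range n, (a + i)

/-- Confluent hypergeometric function `₁F₁(a;b;z)`. -/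
def hyp1F1 (a b z : ℂ) : ℂ := ∑' n : ℕ, poch a n * z ^ n / (poch b n * (n.factorial : ℂ))

/-- Second solution `U(a;b;z)` of the confluent hypergeometric equation (principal branch). -/
def USol (a b z : ℂ) : ℂ :=
  Complex.Gamma (1 - b) / Complex.Gamma (a - b + 1) * hyp1F1 a b z
  + Complex.Gamma (b - 1) / Complex.Gamma a * z ^ (1 - b) * hyp1F1 (a - b + 1) (2 - b) z

/-- `a_k = |k + ε + 1/2 + iρ|`. -/
def coefA (ρ ε : ℝ) (k : ℤ) : ℝ := Norm.norm ((k : ℂ) + (ε : ℂ) + 1/2 + I * (ρ : ℂ))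

/-- `b_k = 2(k + ε)`. -/
def coefB (ρ ε : ℝ) (k : ℤ) : ℝ := 2 * ((k : ℝ) + ε)

/-- The solution `s_k(z)`. -/
def sSol (ρ ε : ℝ) (k : ℤ) (z : ℂ) : ℂ :=
  (-1 : ℂ) ^ k * ((Norm.norm (Complex.Gamma ((k : ℂ) + (ε : ℂ) + 1/2 + I * ρ)) : ℂ) /
      Complex.Gamma ((k : ℂ) + (ε : ℂ) + 1/2 - I * ρ)) *
    hyp1F1 ((k : ℂ) + (ε : ℂ) + 1/2 + I * ρ) (1 + 2 * I * ρ) z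

/-- The solution `t_k(z)`. -/
def tSol (ρ ε : ℝ) (k : ℤ) (z : ℂ) : ℂ :=
  ((Norm.norm (Complex.Gamma (1/2 - (k : ℂ) - (ε : ℂ) - I * ρ)) : ℂ) /
      Complex.Gamma (1/2 - (k : ℂ) - (ε : ℂ) + I * ρ)) *
    hyp1F1 (1/2 - (k : ℂ) - (ε : ℂ) - I * ρ) (1 - 2 * I * ρ) (-z)

/-- The solution `u_k(z)`, for `z ∉ (-∞,0]`. -/
def uSol (ρ ε : ℝ) (k : ℤ) (z : ℂ) : ℂ :=
  (-1 : ℂ) ^ k * (Norm.norm (Complex.Gamma ((k : ℂ) + (ε : ℂ) + 1/2 + I * ρ)) : ℂ) *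
    USol ((k : ℂ) + (ε : ℂ) + 1/2 + I * ρ) (1 + 2 * I * ρ) z

/-- The solution `v_k(z)`, for `z ∉ [0,∞)`. -/
def vSol (ρ ε : ℝ) (k : ℤ) (z : ℂ) : ℂ :=
  (Norm.norm (Complex.Gamma (1/2 - (k : ℂ) - (ε : ℂ) - I * ρ)) : ℂ) *
    USol (1/2 - (k : ℂ) - (ε : ℂ) - I * ρ) (1 - 2 * I * ρ) (-z)

lemma poch_zero (a : ℂ) : poch a 0 = 1 := by simp [poch]

lemma poch_succ (a : ℂ) (n : ℕ) : poch a (n+1) = poch a n * (a + n) :=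
  Finset.prod_range_succ _ _

lemma poch_succ' (a : ℂ) (n : ℕ) : poch a (n+1) = a * poch (a+1) n := by
  rw [poch, Finset.prod_range_succ']
  simp only [Nat.cast_zero, add_zero, mul_comm]
  congr 1
  · unfold poch
    apply Finset.prod_congr rfl
    intro i _
    push_cast
    ring

lemma poch_ne_zero {a : ℂ} (h : ∀ n : ℕ, a + n ≠ 0) (n : ℕ) : poch a n ≠ 0 :=
  Finset.prod_ne_zero_iff.2 fun i _ => h i
lemma summable_norm_hyp_term (a b z : ℂ) (hb : ∀ n : ℕ, b + (n:ℂ) ≠ 0) :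
    Summable fun n : ℕ => ‖poch a n * z ^ n / (poch b n * (n.factorial : ℂ))‖ := by
  set f : ℕ → ℂ := fun n => poch a n * z ^ n / (poch b n * (n.factorial : ℂ)) with hf
  apply summable_of_ratio_norm_eventually_le (r := 1/2) (by norm_num)
  rw [Filter.eventually_atTop]
  refine ⟨⌊2*‖b‖ + ‖a‖ + 8*‖z‖⌋₊ + 1, fun n hn => ?_⟩
  have hnn : (2*‖b‖ + ‖a‖ + 8*‖z‖) < (n:ℝ) := by
    calc _ < ((⌊2*‖b‖ + ‖a‖ + 8*‖z‖⌋₊ + 1 : ℕ) : ℝ) := by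
            push_cast; exact Nat.lt_floor_add_one _
      _ ≤ n := by exact_mod_cast hn
  have hA : ‖a + n‖ ≤ ‖a‖ + n := by
    simpa using (norm_add_le a n)
  have hB : (n:ℝ) - ‖b‖ ≤ ‖b + n‖ := by
    have := norm_add_le (b + n) (-b)
    simp only [add_neg_cancel_comm] at this
    simpa [map_neg] using sub_le_iff_le_add.2 this
  have hB0 : (0:ℝ) < ‖b + n‖ := by
    have h0 : (0:ℝ) ≤ ‖a‖ := norm_nonneg _
    have h1 : (0:ℝ) ≤ ‖z‖ := norm_nonneg _
    have h2 : (0:ℝ) ≤ ‖b‖ := norm_nonneg _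
    nlinarith
  have hrel : f (n+1) = f n * ((a+n) * z / ((b+n) * (n+1))) := by
    rw [hf]
    simp only
    rw [poch_succ a n, poch_succ b n, Nat.factorial_succ]
    have h1 : poch b n ≠ 0 := poch_ne_zero hb n
    have h2 : ((n.factorial : ℂ)) ≠ 0 := Nat.cast_ne_zero.2 n.factorial_ne_zero
    have h3 : b + (n:ℂ) ≠ 0 := hb n
    have h4 : ((n:ℂ)+1) ≠ 0 := Nat.cast_add_one_ne_zero n
    push_cast
    field_simp
    ring
  simp only [norm_norm]
  show ‖f (n+1)‖ ≤ 1/2 * ‖f n‖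
  rw [hrel, norm_mul]
  have hq : ‖(a+n) * z / ((b+n) * (n+1))‖ ≤ 1/2 := by
    rw [norm_div, norm_mul, norm_mul]
    have hn1 : ‖(n:ℂ)+1‖ = (n:ℝ)+1 := by
      rw [show ((n:ℂ)+1) = (((n+1:ℕ)):ℂ) by push_cast; ring, Complex.norm_natCast]
      push_cast; ring
    rw [hn1, div_le_iff₀ (mul_pos hB0 (by positivity : (0:ℝ) < (n:ℝ)+1))]
    have h0 : (0:ℝ) ≤ ‖a‖ := norm_nonneg _
    have h1 : (0:ℝ) ≤ ‖z‖ := norm_nonneg _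
    have h2 : (0:ℝ) ≤ ‖b‖ := norm_nonneg _
    nlinarith [mul_le_mul_of_nonneg_right hA h1,
      mul_le_mul_of_nonneg_right hB (by linarith : (0:ℝ) ≤ (n:ℝ)+1)]
  calc ‖f n‖ * ‖(a+n) * z / ((b+n) * (n+1))‖ ≤ ‖f n‖ * (1/2) := by
        exact mul_le_mul_of_nonneg_left hq (norm_nonneg _)
    _ = 1/2 * ‖f n‖ := by ring
def TT (a c : ℂ) (N m : ℕ) : ℂ :=
  (N.choose m : ℂ) * poch a m * poch (a-c) (N-m) / (poch (1+c) m * poch (1-c) (N-m))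

def wS (a c : ℂ) (N m : ℕ) : ℂ := (c + 2*m - N) * TT a c N m

set_option maxHeartbeats 1000000 in
lemma key_step_mid (a c : ℂ) (hc1 : ∀ n : ℕ, 1 + c + (n:ℂ) ≠ 0)
    (hc2 : ∀ n : ℕ, 1 - c + (n:ℂ) ≠ 0) (j l : ℕ) :
    wS a c (l+j+1+1) (j+1)
      = wS a c (l+j+1) (j+1) + (-(a+((j:ℂ)+1)) * TT a c (l+j+1) (j+1) - -(a+(j:ℂ)) * TT a c (l+j+1) j) := by
  have hBrel : ((l+j+1).choose (j+1) : ℂ) * ((j:ℂ)+1) = ((l+j+1).choose j : ℂ) * ((l:ℂ)+1) := by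
    have := Nat.choose_succ_right_eq (l+j+1) j
    have h2 : l + j + 1 - j = l + 1 := by omega
    rw [h2] at this
    exact_mod_cast this
  have e1 : l+j+1+1 - (j+1) = l+1 := by omega
  have e2 : l+j+1 - (j+1) = l := by omega
  have e3 : l+j+1 - j = l+1 := by omega
  have e4 : (l+j+1+1).choose (j+1) = (l+j+1).choose j + (l+j+1).choose (j+1) := by
    rw [show l+j+1+1 = (l+j+1)+1 from rfl, Nat.choose_succ_succ]
  set B1 : ℂ := ((l+j+1).choose (j+1) : ℂ) with hB1d
  set B2 : ℂ := ((l+j+1).choose j : ℂ) with hB2d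
  set pa := poch a j
  set pb := poch (a-c) l
  set q1 := poch (1+c) j
  set q2 := poch (1-c) l
  set D := q1 * (1+c+(j:ℂ)) * (q2 * (1-c+(l:ℂ))) with hDd
  have hq1 : q1 ≠ 0 := poch_ne_zero hc1 j
  have hq2 : q2 ≠ 0 := poch_ne_zero hc2 l
  have hD : D ≠ 0 := by
    apply mul_ne_zero (mul_ne_zero hq1 (hc1 j)) (mul_ne_zero hq2 (hc2 l))
  have h1 : wS a c (l+j+1+1) (j+1)
      = ((c + 2*((j:ℂ)+1) - ((l:ℂ)+(j:ℂ)+2)) * (B2+B1) * (pa*(a+(j:ℂ))) * (pb*(a-c+(l:ℂ)))) / D := by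
    rw [wS, TT, e1, e4, poch_succ a j, poch_succ (a-c) l, poch_succ (1+c) j, poch_succ (1-c) l]
    push_cast
    ring
  have h2 : wS a c (l+j+1) (j+1)
      = ((c + 2*((j:ℂ)+1) - ((l:ℂ)+(j:ℂ)+1)) * B1 * (pa*(a+(j:ℂ))) * pb * (1-c+(l:ℂ))) / D := by
    rw [wS, TT, e2, poch_succ a j, poch_succ (1+c) j]
    have n3 := hc1 j; have n4 := hc2 l
    push_cast
    rw [← mul_div_assoc, div_eq_div_iff (by exact mul_ne_zero (mul_ne_zero hq1 n3) hq2) hD]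
    ring
  have h3 : -(a+((j:ℂ)+1)) * TT a c (l+j+1) (j+1)
      = (-(a+((j:ℂ)+1)) * B1 * (pa*(a+(j:ℂ))) * pb * (1-c+(l:ℂ))) / D := by
    rw [TT, e2, poch_succ a j, poch_succ (1+c) j]
    have n3 := hc1 j; have n4 := hc2 l
    push_cast
    rw [← mul_div_assoc, div_eq_div_iff (by exact mul_ne_zero (mul_ne_zero hq1 n3) hq2) hD]
    ring
  have h4 : -(a+(j:ℂ)) * TT a c (l+j+1) j
      = (-(a+(j:ℂ)) * B2 * pa * (pb*(a-c+(l:ℂ))) * (1+c+(j:ℂ))) / D := by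
    rw [TT, e3, poch_succ (a-c) l, poch_succ (1-c) l]
    have n3 := hc1 j; have n4 := hc2 l
    push_cast
    rw [← mul_div_assoc, div_eq_div_iff (by exact mul_ne_zero hq1 (mul_ne_zero hq2 n4)) hD]
    ring
  rw [h1, h2, h3, h4, div_sub_div_same, ← add_div]
  rw [div_eq_div_iff hD hD]
  linear_combination (D * pa * pb * (a+(j:ℂ)) * (a-c+(l:ℂ))) * hBrel

def gS (a c : ℂ) (n : ℕ) : ℕ → ℂ
  | 0 => 0
  | (j+1) => -(a+(j:ℂ)) * TT a c n j

lemma TT_top (a c : ℂ) (n : ℕ) : TT a c n (n+1) = 0 := by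
  simp [TT, Nat.choose_eq_zero_of_lt]

lemma key_sum (a c : ℂ) (hc1 : ∀ n : ℕ, 1 + c + (n:ℂ) ≠ 0)
    (hc2 : ∀ n : ℕ, 1 - c + (n:ℂ) ≠ 0) :
    ∀ n : ℕ, ∑ m ∈ Finset.range (n+1), wS a c n m = c := by
  intro n
  induction n with
  | zero => simp [wS, TT, poch_zero]
  | succ n ih =>
    have hstep : ∀ m, m ∈ Finset.range (n+1+1) →
        wS a c (n+1) m = wS a c n m + (gS a c n (m+1) - gS a c n m) := by
      intro m hm
      rw [Finset.mem_range] at hm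
      match m with
      | 0 =>
        simp only [wS, TT, gS, Nat.sub_zero, Nat.choose_zero_right, poch_zero, Nat.cast_one,
          Nat.cast_zero]
        rw [poch_succ (a-c) n, poch_succ (1-c) n]
        have n4 := hc2 n
        have hq2 : poch (1-c) n ≠ 0 := poch_ne_zero hc2 n
        field_simp
        push_cast; ring
      | (j+1) =>
        by_cases hj : j + 1 ≤ n
        · obtain ⟨l, rfl⟩ : ∃ l, n = l + j + 1 := ⟨n - (j+1), by omega⟩
          simp only [gS]
          push_cast
          exact key_step_mid a c hc1 hc2 j l
        · have hjn : j = n := by omega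
          subst hjn
          simp only [gS, TT_top, wS, mul_zero, zero_mul, sub_zero]
          simp only [TT, Nat.sub_self, Nat.choose_self, poch_zero, Nat.cast_one, mul_one, one_mul]
          rw [poch_succ a j, poch_succ (1+c) j]
          have n3 := hc1 j
          have hq1 : poch (1+c) j ≠ 0 := poch_ne_zero hc1 j
          field_simp
          push_cast; ring
    rw [Finset.sum_congr rfl hstep, Finset.sum_add_distrib, Finset.sum_range_sub (gS a c n),
      Finset.sum_range_succ, ih]
    have h1 : wS a c n (n+1) = 0 := by simp [wS, TT_top]
    have h2 : gS a c n (n+1+1) = 0 := by simp [gS, TT_top]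
    rw [h1, h2]
    simp [gS]

lemma exp_tsum (z : ℂ) : Complex.exp z = ∑' n : ℕ, z ^ n / (n.factorial : ℂ) := by
  rw [Complex.exp_eq_exp_ℂ, NormedSpace.exp_eq_tsum_div]

lemma cross_term (a c z pa pa1 pb pb1 q1 q2 : ℂ) (m j n B : ℕ)
    (hp1 : a * pa1 = pa * (a+(m:ℂ))) (hp2 : (a-c) * pb1 = pb * ((a-c)+(j:ℂ)))
    (hq1 : q1 ≠ 0) (hq2 : q2 ≠ 0) (hB : (B:ℂ) ≠ 0)
    (hfact : (B:ℂ) * (m.factorial:ℂ) * (j.factorial:ℂ) = (n.factorial:ℂ))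
    (hz : z^m * z^j = z^n) (hj : (j:ℂ) = (n:ℂ) - m) :
    a * (pa1 * z^m/(q1 * (m.factorial:ℂ)) * (pb * z^j/(q2 * (j.factorial:ℂ))))
      - (a-c) * (pa * z^m/(q1 * (m.factorial:ℂ)) * (pb1 * z^j/(q2 * (j.factorial:ℂ))))
      = (c + 2*(m:ℂ) - (n:ℂ)) * (B:ℂ) * pa * pb / (q1 * q2) * (z^n/(n.factorial:ℂ)) := by
  have e1 : a * (pa1 * z^m/(q1 * (m.factorial:ℂ)) * (pb * z^j/(q2 * (j.factorial:ℂ))))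
      = (a * pa1) * pb * (z^m*z^j)/(q1 * (m.factorial:ℂ) * (q2 * (j.factorial:ℂ))) := by
    ring
  have e2 : (a-c) * (pa * z^m/(q1 * (m.factorial:ℂ)) * (pb1 * z^j/(q2 * (j.factorial:ℂ))))
      = ((a-c) * pb1) * pa * (z^m*z^j)/(q1 * (m.factorial:ℂ) * (q2 * (j.factorial:ℂ))) := by
    ring
  rw [e1, e2, hp1, hp2, hz, ← hfact, hj]
  have hm : ((m.factorial:ℕ):ℂ) ≠ 0 := Nat.cast_ne_zero.2 m.factorial_ne_zero
  have hjf : ((j.factorial:ℕ):ℂ) ≠ 0 := Nat.cast_ne_zero.2 j.factorial_ne_zero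
  field_simp
  ring

lemma hyp1F1_as_tsum (a b z : ℂ) :
    hyp1F1 a b z = ∑' n : ℕ, poch a n * z ^ n / (poch b n * (n.factorial : ℂ)) := rfl

lemma star_id (a c z : ℂ) (hc1 : ∀ n : ℕ, 1 + c + (n:ℂ) ≠ 0)
    (hc2 : ∀ n : ℕ, 1 - c + (n:ℂ) ≠ 0) :
    a * (hyp1F1 (a+1) (1+c) z * hyp1F1 (a-c) (1-c) z)
      - (a-c) * (hyp1F1 a (1+c) z * hyp1F1 (a-c+1) (1-c) z) = c * Complex.exp z := by
  set f1 : ℕ → ℂ := fun n => poch (a+1) n * z ^ n / (poch (1+c) n * (n.factorial : ℂ)) with hf1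
  set g1 : ℕ → ℂ := fun n => poch (a-c) n * z ^ n / (poch (1-c) n * (n.factorial : ℂ)) with hg1
  set f2 : ℕ → ℂ := fun n => poch a n * z ^ n / (poch (1+c) n * (n.factorial : ℂ)) with hf2
  set g2 : ℕ → ℂ := fun n => poch (a-c+1) n * z ^ n / (poch (1-c) n * (n.factorial : ℂ)) with hg2
  have hnf1 : Summable fun n => ‖f1 n‖ := summable_norm_hyp_term (a+1) (1+c) z hc1
  have hng1 : Summable fun n => ‖g1 n‖ := summable_norm_hyp_term (a-c) (1-c) z hc2
  have hnf2 : Summable fun n => ‖f2 n‖ := summable_norm_hyp_term a (1+c) z hc1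
  have hng2 : Summable fun n => ‖g2 n‖ := summable_norm_hyp_term (a-c+1) (1-c) z hc2
  have hprod1 : hyp1F1 (a+1) (1+c) z * hyp1F1 (a-c) (1-c) z
      = ∑' n : ℕ, ∑ kl ∈ Finset.HasAntidiagonal.antidiagonal n, f1 kl.1 * g1 kl.2 :=
    tsum_mul_tsum_eq_tsum_sum_antidiagonal_of_summable_norm hnf1 hng1
  have hprod2 : hyp1F1 a (1+c) z * hyp1F1 (a-c+1) (1-c) z
      = ∑' n : ℕ, ∑ kl ∈ Finset.HasAntidiagonal.antidiagonal n, f2 kl.1 * g2 kl.2 :=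
    tsum_mul_tsum_eq_tsum_sum_antidiagonal_of_summable_norm hnf2 hng2
  have hS1 : Summable fun n : ℕ => ∑ kl ∈ Finset.HasAntidiagonal.antidiagonal n, f1 kl.1 * g1 kl.2 :=
    (summable_norm_sum_mul_antidiagonal_of_summable_norm hnf1 hng1).of_norm
  have hS2 : Summable fun n : ℕ => ∑ kl ∈ Finset.HasAntidiagonal.antidiagonal n, f2 kl.1 * g2 kl.2 :=
    (summable_norm_sum_mul_antidiagonal_of_summable_norm hnf2 hng2).of_norm
  rw [hprod1, hprod2, ← tsum_mul_left, ← tsum_mul_left,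
    ← Summable.tsum_sub (hS1.mul_left a) (hS2.mul_left (a-c))]
  have hper : ∀ n : ℕ,
      a * (∑ kl ∈ Finset.HasAntidiagonal.antidiagonal n, f1 kl.1 * g1 kl.2)
        - (a-c) * (∑ kl ∈ Finset.HasAntidiagonal.antidiagonal n, f2 kl.1 * g2 kl.2)
      = c * (z^n / (n.factorial : ℂ)) := by
    intro n
    rw [Finset.Nat.sum_antidiagonal_eq_sum_range_succ_mk, Finset.Nat.sum_antidiagonal_eq_sum_range_succ_mk,
      Finset.mul_sum, Finset.mul_sum, ← Finset.sum_sub_distrib]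
    have hks := congrArg (fun t => t * (z^n / (n.factorial : ℂ))) (key_sum a c hc1 hc2 n)
    rw [Finset.sum_mul] at hks
    rw [← hks]
    refine Finset.sum_congr rfl (fun m hm => ?_)
    rw [Finset.mem_range] at hm
    have hm' : m ≤ n := by omega
    have hp1 : a * poch (a+1) m = poch a m * (a+(m:ℂ)) := by
      rw [← poch_succ', poch_succ]
    have hp2 : (a-c) * poch (a-c+1) (n-m) = poch (a-c) (n-m) * ((a-c)+((n-m:ℕ):ℂ)) := by
      rw [← poch_succ', poch_succ]
    have hz : z^m * z^(n-m) = z^n := by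
      rw [← pow_add, Nat.add_sub_cancel' hm']
    have hfact : ((n.choose m:ℕ):ℂ) * (m.factorial:ℂ) * ((n-m).factorial:ℂ) = (n.factorial:ℂ) := by
      exact_mod_cast congrArg (Nat.cast : ℕ → ℂ) (Nat.choose_mul_factorial_mul_factorial hm')
    have hjc : (((n-m:ℕ)):ℂ) = (n:ℂ) - m := by
      push_cast [Nat.cast_sub hm']
      ring
    have hB : ((n.choose m:ℕ):ℂ) ≠ 0 := Nat.cast_ne_zero.2 (Nat.choose_pos hm').ne'
    have := cross_term a c z (poch a m) (poch (a+1) m) (poch (a-c) (n-m)) (poch (a-c+1) (n-m))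
      (poch (1+c) m) (poch (1-c) (n-m)) m (n-m) n (n.choose m) hp1 hp2
      (poch_ne_zero hc1 m) (poch_ne_zero hc2 (n-m)) hB hfact hz hjc
    rw [hf1, hg1, hf2, hg2]
    simp only
    rw [this, wS, TT]
    ring
  rw [tsum_congr hper, tsum_mul_left, ← exp_tsum]

lemma assemble (α R ΓA ΓA' Γc P F1 F2 G1 G2 A A' c eZ : ℂ)
    (hGA : ΓA ≠ 0) (hGA' : ΓA' ≠ 0) (hA0 : A ≠ 0) (hA'0 : A' ≠ 0) (hR : R ≠ 0)
    (hsq : R^2 = ΓA * ΓA') (hα : α^2 = A * A') {Γmc : ℂ}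
    (hstar : A * F2 * G1 - A' * F1 * G2 = c * eZ) :
    α * ( ((R/ΓA') * F1) * (-((α*R) * (Γmc/(A'*ΓA') * F2 + Γc/(A*ΓA) * (P * G2))))
        - (-(((α*R)/(A'*ΓA')) * F2)) * (R * (Γmc/ΓA' * F1 + Γc/ΓA * (P * G1))) )
      = eZ * P * (c * Γc) := by
  have hΓA'eq : ΓA' = R^2/ΓA := by
    rw [eq_div_iff hGA]
    linear_combination -hsq
  have key : ((R/ΓA') * F1) * (-((α*R) * (Γmc/(A'*ΓA') * F2 + Γc/(A*ΓA) * (P * G2))))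
        - (-(((α*R)/(A'*ΓA')) * F2)) * (R * (Γmc/ΓA' * F1 + Γc/ΓA * (P * G1)))
      = -(Γc * P * α * (F1*G2/A - F2*G1/A')) := by
    rw [hΓA'eq]
    field_simp [hGA, hA0, hA'0, hR]
    have hX : R^8*R⁻¹^8 * (ΓA^2*ΓA⁻¹^2) * (A*A⁻¹) * (A'^2*A'⁻¹^2) = 1 := by
      rw [← mul_pow, ← mul_pow, ← mul_pow, mul_inv_cancel₀ hR, mul_inv_cancel₀ hGA,
        mul_inv_cancel₀ hA0, mul_inv_cancel₀ hA'0]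
      norm_num
    ring
  calc α * (((R/ΓA') * F1) * (-((α*R) * (Γmc/(A'*ΓA') * F2 + Γc/(A*ΓA) * (P * G2))))
        - (-(((α*R)/(A'*ΓA')) * F2)) * (R * (Γmc/ΓA' * F1 + Γc/ΓA * (P * G1))))
      = -(Γc*P*(α^2)*(F1*G2/A - F2*G1/A')) := by rw [key]; ring
    _ = -(Γc*P*((A*A'))*(F1*G2/A - F2*G1/A')) := by rw [hα]
    _ = Γc*P*(A*F2*G1 - A'*F1*G2) := by field_simp; ring
    _ = Γc*P*(c*eZ) := by rw [hstar]
    _ = eZ * P * (c * Γc) := by ring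

set_option maxHeartbeats 1000000 in
/-- the Wronskian `[s(z),u(z)]_k = a_k (s_k u_{k+1} - s_{k+1} u_k)` equals
`e^z z^{-2iρ} Γ(1+2iρ)` for all `k` (hence is independent of `k`), and is nonzero. -/
theorem laguerre_wronskian_s_u (ρ ε : ℝ) (hρ : 0 < ρ) (hε : ε ∈ Set.Ico (0 : ℝ) 1)
    (z : ℂ) (hz : ¬(z.im = 0 ∧ z.re ≤ 0)) :
    (∀ k : ℤ,
      (coefA ρ ε k : ℂ) * (sSol ρ ε k z * uSol ρ ε (k + 1) z - sSol ρ ε (k + 1) z * uSol ρ ε k z)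
        = Complex.exp z * z ^ (-2 * I * (ρ : ℂ)) * Complex.Gamma (1 + 2 * I * ρ)) ∧
    Complex.exp z * z ^ (-2 * I * (ρ : ℂ)) * Complex.Gamma (1 + 2 * I * ρ) ≠ 0 := by
  have hz0 : z ≠ 0 := by
    intro h
    exact hz (by simp [h])
  set c : ℂ := 2 * I * (ρ:ℂ) with hc
  have hcim : c.im = 2*ρ := by rw [hc]; simp
  have hc0 : c ≠ 0 := by
    intro h
    rw [Complex.ext_iff] at h
    simp [hcim] at h
    linarith [h.2]
  have hc1 : ∀ n : ℕ, 1 + c + (n:ℂ) ≠ 0 := by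
    intro n h
    have := congrArg Complex.im h
    simp [hcim] at this
    linarith
  have hc2 : ∀ n : ℕ, 1 - c + (n:ℂ) ≠ 0 := by
    intro n h
    have := congrArg Complex.im h
    simp [hcim] at this
    linarith
  have hGc : Complex.Gamma (1 + c) ≠ 0 := by
    apply Complex.Gamma_ne_zero
    intro m h
    have := congrArg Complex.im h
    simp [hcim] at this
    linarith
  have hPexp : (-2 * I * (ρ:ℂ)) = -c := by rw [hc]; ring
  rw [hPexp]
  have hP0 : z ^ (-c) ≠ 0 := by
    rw [Complex.cpow_def_of_ne_zero hz0]
    exact Complex.exp_ne_zero _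
  refine ⟨fun k => ?_, mul_ne_zero (mul_ne_zero (Complex.exp_ne_zero z) hP0) hGc⟩
  set A : ℂ := (k:ℂ) + (ε:ℂ) + 1/2 + I*(ρ:ℂ) with hA
  set A' : ℂ := (k:ℂ) + (ε:ℂ) + 1/2 - I*(ρ:ℂ) with hA'
  have hAim : A.im = ρ := by rw [hA]; simp
  have hA'im : A'.im = -ρ := by rw [hA']; simp
  have hA0 : A ≠ 0 := by
    intro h
    rw [h] at hAim
    simp at hAim
    linarith
  have hA'0 : A' ≠ 0 := by
    intro h
    rw [h] at hA'im
    simp at hA'im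
    linarith
  have hGA : Complex.Gamma A ≠ 0 := by
    apply Complex.Gamma_ne_zero
    intro m h
    have := congrArg Complex.im h
    rw [hAim] at this
    simp at this
    linarith
  have hGA' : Complex.Gamma A' ≠ 0 := by
    apply Complex.Gamma_ne_zero
    intro m h
    have := congrArg Complex.im h
    rw [hA'im] at this
    simp at this
    linarith
  have hGA1 : Complex.Gamma (A+1) = A * Complex.Gamma A := Complex.Gamma_add_one A hA0
  have hGA'1 : Complex.Gamma (A'+1) = A' * Complex.Gamma A' := Complex.Gamma_add_one A' hA'0
  have hconj : (starRingEnd ℂ) A = A' := by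
    rw [hA, hA']
    simp [map_add, map_sub, map_mul, map_div₀, map_one, map_ofNat, map_intCast,
      Complex.conj_I, Complex.conj_ofReal]
    ring
  have hGconj : Complex.Gamma A' = (starRingEnd ℂ) (Complex.Gamma A) := by
    rw [← hconj, Complex.Gamma_conj]
  have hsq : ((‖Complex.Gamma A‖ : ℝ) : ℂ)^2
      = Complex.Gamma A * Complex.Gamma A' := by
    rw [hGconj, Complex.mul_conj]
    norm_cast
    exact Complex.sq_norm _
  have hα2 : ((‖A‖ : ℝ) : ℂ)^2 = A * A' := by
    rw [← hconj, Complex.mul_conj]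
    norm_cast
    exact Complex.sq_norm _
  have hcoefα : ((coefA ρ ε k : ℝ) : ℂ) = ((‖A‖ : ℝ) : ℂ) := by
    rw [coefA, hA]
  have hR0 : ((‖Complex.Gamma A‖ : ℝ) : ℂ) ≠ 0 := by
    simp [Complex.ofReal_eq_zero, map_eq_zero, hGA]
  have hk1A : ((k+1:ℤ):ℂ) + (ε:ℂ) + 1/2 + I*(ρ:ℂ) = A + 1 := by
    rw [hA]; push_cast; ring
  have habs1 : ((‖Complex.Gamma (A+1)‖ : ℝ) : ℂ)
      = ((‖A‖ : ℝ) : ℂ) * ((‖Complex.Gamma A‖ : ℝ) : ℂ) := by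
    rw [hGA1, norm_mul]
    push_cast
    ring
  have hAc : A - c = A' := by rw [hA, hA', hc]; ring
  have hstar0 := star_id A c z hc1 hc2
  rw [hAc] at hstar0
  have hstar : A * hyp1F1 (A+1) (1+c) z * hyp1F1 A' (1-c) z
      - A' * hyp1F1 A (1+c) z * hyp1F1 (A'+1) (1-c) z = c * Complex.exp z := by
    linear_combination hstar0
  -- expansions
  have hsk : sSol ρ ε k z = (-1:ℂ)^k *
      ((((‖Complex.Gamma A‖ : ℝ) : ℂ) / Complex.Gamma A') * hyp1F1 A (1+c) z) := by
    unfold sSol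
    rw [← hA, ← hA', ← hc]
    ring
  have hsk1 : sSol ρ ε (k+1) z = -((-1:ℂ)^k) *
      ((((‖A‖ : ℝ):ℂ) * ((‖Complex.Gamma A‖ : ℝ) : ℂ) / (A' * Complex.Gamma A'))
        * hyp1F1 (A+1) (1+c) z) := by
    unfold sSol
    rw [show ((k+1:ℤ):ℂ) + (ε:ℂ) + 1/2 - I*(ρ:ℂ) = A' + 1 from by rw [hA']; push_cast; ring]
    rw [hk1A, ← hc, habs1, hGA'1, zpow_add₀ (by norm_num : (-1:ℂ) ≠ 0) k 1, zpow_one]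
    ring
  have huk : uSol ρ ε k z = (-1:ℂ)^k *
      (((‖Complex.Gamma A‖ : ℝ) : ℂ) *
        (Complex.Gamma (-c)/Complex.Gamma A' * hyp1F1 A (1+c) z
          + Complex.Gamma c/Complex.Gamma A * (z^(-c) * hyp1F1 A' (1-c) z))) := by
    unfold uSol USol
    rw [← hA, ← hc]
    rw [show (1:ℂ) - (1+c) = -c from by ring, show A - (1+c) + 1 = A' from by rw [hA, hA', hc]; ring,
      show (2:ℂ) - (1+c) = 1-c from by ring, show (1+c) - 1 = c from by ring]
    ring
  have huk1 : uSol ρ ε (k+1) z = -((-1:ℂ)^k) *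
      ((((‖A‖ : ℝ):ℂ) * ((‖Complex.Gamma A‖ : ℝ) : ℂ)) *
        (Complex.Gamma (-c)/(A' * Complex.Gamma A') * hyp1F1 (A+1) (1+c) z
          + Complex.Gamma c/(A * Complex.Gamma A) * (z^(-c) * hyp1F1 (A'+1) (1-c) z))) := by
    unfold uSol USol
    rw [hk1A, ← hc]
    rw [show (1:ℂ) - (1+c) = -c from by ring, show A + 1 - (1+c) + 1 = A' + 1 from by rw [hA, hA', hc]; ring,
      show (2:ℂ) - (1+c) = 1-c from by ring, show (1+c) - 1 = c from by ring]
    rw [habs1, hGA'1, hGA1, zpow_add₀ (by norm_num : (-1:ℂ) ≠ 0) k 1, zpow_one]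
    ring
  have he : ((-1:ℂ)^k) * ((-1:ℂ)^k) = 1 := by
    rw [← zpow_add₀ (by norm_num : (-1:ℂ) ≠ 0), ← two_mul, zpow_mul]
    norm_num
  have hasm := assemble ((‖A‖ : ℝ):ℂ) ((‖Complex.Gamma A‖ : ℝ):ℂ)
    (Complex.Gamma A) (Complex.Gamma A') (Complex.Gamma c) (z^(-c))
    (hyp1F1 A (1+c) z) (hyp1F1 (A+1) (1+c) z) (hyp1F1 A' (1-c) z) (hyp1F1 (A'+1) (1-c) z)
    A A' c (Complex.exp z) hGA hGA' hA0 hA'0 hR0 hsq hα2 (Γmc := Complex.Gamma (-c)) hstar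
  rw [hsk, hsk1, huk, huk1, hcoefα]
  have hGc1 : Complex.Gamma (1 + c) = c * Complex.Gamma c := by
    rw [show (1:ℂ)+c = c+1 from by ring, Complex.Gamma_add_one c hc0]
  rw [hGc1]
  calc ((‖A‖ : ℝ):ℂ) *
      ((-1:ℂ)^k * ((((‖Complex.Gamma A‖ : ℝ) : ℂ) / Complex.Gamma A') * hyp1F1 A (1+c) z)
        * (-((-1:ℂ)^k) * ((((‖A‖ : ℝ):ℂ) * ((‖Complex.Gamma A‖ : ℝ) : ℂ)) *
            (Complex.Gamma (-c)/(A' * Complex.Gamma A') * hyp1F1 (A+1) (1+c) z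
              + Complex.Gamma c/(A * Complex.Gamma A) * (z^(-c) * hyp1F1 (A'+1) (1-c) z))))
        - (-((-1:ℂ)^k) * ((((‖A‖ : ℝ):ℂ) * ((‖Complex.Gamma A‖ : ℝ) : ℂ) / (A' * Complex.Gamma A'))
            * hyp1F1 (A+1) (1+c) z))
          * ((-1:ℂ)^k * (((‖Complex.Gamma A‖ : ℝ) : ℂ) *
              (Complex.Gamma (-c)/Complex.Gamma A' * hyp1F1 A (1+c) z
                + Complex.Gamma c/Complex.Gamma A * (z^(-c) * hyp1F1 A' (1-c) z)))))
      = ((‖A‖ : ℝ):ℂ) *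
        ( (((((‖Complex.Gamma A‖ : ℝ) : ℂ))/Complex.Gamma A') * hyp1F1 A (1+c) z)
            * (-((((‖A‖ : ℝ):ℂ) * (((‖Complex.Gamma A‖ : ℝ) : ℂ))) *
                (Complex.Gamma (-c)/(A' * Complex.Gamma A') * hyp1F1 (A+1) (1+c) z
                  + Complex.Gamma c/(A * Complex.Gamma A) * (z^(-c) * hyp1F1 (A'+1) (1-c) z))))
          - (-(((((‖A‖ : ℝ):ℂ) * (((‖Complex.Gamma A‖ : ℝ) : ℂ)))/(A' * Complex.Gamma A'))
                * hyp1F1 (A+1) (1+c) z))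
            * ((((‖Complex.Gamma A‖ : ℝ) : ℂ)) *
                (Complex.Gamma (-c)/Complex.Gamma A' * hyp1F1 A (1+c) z
                  + Complex.Gamma c/Complex.Gamma A * (z^(-c) * hyp1F1 A' (1-c) z))) ) := by
        linear_combination (((‖A‖ : ℝ):ℂ) *
          ((((((‖A‖ : ℝ):ℂ) * (((‖Complex.Gamma A‖ : ℝ) : ℂ)))/(A' * Complex.Gamma A'))
                * hyp1F1 (A+1) (1+c) z) * ((((‖Complex.Gamma A‖ : ℝ) : ℂ)) *
                (Complex.Gamma (-c)/Complex.Gamma A' * hyp1F1 A (1+c) z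
                  + Complex.Gamma c/Complex.Gamma A * (z^(-c) * hyp1F1 A' (1-c) z)))
            - (((((‖Complex.Gamma A‖ : ℝ) : ℂ))/Complex.Gamma A') * hyp1F1 A (1+c) z)
            * ((((‖A‖ : ℝ):ℂ) * (((‖Complex.Gamma A‖ : ℝ) : ℂ))) *
                (Complex.Gamma (-c)/(A' * Complex.Gamma A') * hyp1F1 (A+1) (1+c) z
                  + Complex.Gamma c/(A * Complex.Gamma A) * (z^(-c) * hyp1F1 (A'+1) (1-c) z))))) * he
    _ = Complex.exp z * z^(-c) * (c * Complex.Gamma c) := hasm
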